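/- Let d ≥ 1. For every family v : Fin (d+1) → (Fin d → ℝ) and all points p, q : Fin d → ℝ, Σ_{i : Fin (d+1)} (-1)^i * det M_i(p) = Σ_{i : Fin (d+1)} (-1)^i * det M_i(q), where M_i(p) is the d × d matrix whose k-th row (k : Fin d) is v (Fin.succAbove i k) - p, i.e. the rows are the vectors from p to the vertices v j with j ≠ i, in increasing order of j. -/

import Mathlib

/-- The alternating sum over the facets of a (possibly degenerate) `d`-simplex
`v : Fin (d+1) → (Fin d → ℝ)` of the determinants of the matrices whose rows are the vectors
from a base point `p` to the facet vertices does not depend on the base point `p`. -/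
theorem alt_sum_facet_dets_base_point_independent (d : ℕ) (hd : 1 ≤ d)
    (v : Fin (d + 1) → (Fin d → ℝ)) (p q : Fin d → ℝ) :
    ∑ i : Fin (d + 1), (-1 : ℝ) ^ (i : ℕ) *
        Matrix.det (Matrix.of fun k => v (Fin.succAbove i k) - p) =
      ∑ i : Fin (d + 1), (-1 : ℝ) ^ (i : ℕ) *
        Matrix.det (Matrix.of fun k => v (Fin.succAbove i k) - q) := by
  set A : (Fin d → ℝ) → Matrix (Fin (d+1)) (Fin (d+1)) ℝ :=
    fun r => Matrix.of fun i => Fin.cons 1 (fun l => v i l - r l) with hA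
  have key : ∀ r : Fin d → ℝ,
      ∑ i : Fin (d+1), (-1:ℝ)^(i:ℕ) *
        Matrix.det (Matrix.of fun k => v (Fin.succAbove i k) - r) = (A r).det := by
    intro r
    rw [Matrix.det_succ_column_zero]
    refine Finset.sum_congr rfl fun i _ => ?_
    have h0 : A r i 0 = 1 := rfl
    rw [h0, mul_one]
    congr 1
  rw [key p, key q]
  set B : Matrix (Fin (d+1)) (Fin (d+1)) ℝ :=
    Matrix.of (Fin.cons (Fin.cons 1 (fun l => q l - p l))
      (fun k => Fin.cons 0 (fun l => if k = l then 1 else 0))) with hB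
  have hAB : A p = A q * B := by
    ext i j
    rw [Matrix.mul_apply]
    refine Fin.cases ?_ (fun l => ?_) j
    · rw [Fin.sum_univ_succ]
      simp [hA, hB]
    · rw [Fin.sum_univ_succ]
      simp only [hA, hB, Matrix.of_apply, Fin.cons_zero, Fin.cons_succ]
      rw [Finset.sum_eq_single l] <;> simp +contextual [mul_ite]
  have hdetB : B.det = 1 := by
    rw [Matrix.det_succ_column_zero, Fin.sum_univ_succ]
    have h1 : (B.submatrix Fin.succ Fin.succ) = 1 := by
      ext k l
      simp [hB, Matrix.one_apply]
    rw [Fin.succAbove_zero, h1]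
    simp [hB, Fin.succAbove_zero, h1]
  rw [hAB, Matrix.det_mul, hdetB, mul_one]
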